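/- arXiv:1912.04972 — 5 statements merged into one kernel-verified Lean document; each statement's English description precedes it below -/
import Mathlib

section
/- For every integer k ≥ 2, the set of k-free positive integers has natural density 1/ζ(k); that is, if Q_k(x) denotes the number of k-free positive integers not exceeding x, then Q_k(x)/x tends to 1/ζ(k) as x → ∞. -/
open Filter MeasureTheory Finset

/-- `n` is `k`-free: no `d^k` with `d > 1` divides `n`. -/
def KFree (k n : ℕ) : Prop := ∀ d : ℕ, 1 < d → ¬ d ^ k ∣ n

open Classical in
/-- `Q k x` = number of `k`-free positive integers not exceeding `x`. -/
noncomputable def Qf (k : ℕ) (x : ℝ) : ℕ :=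
  ((Finset.Icc 1 ⌊x⌋₊).filter fun n => KFree k n).card

/-- `R k x = Q_k(x) - x / ζ(k)`. -/
noncomputable def Rf (k : ℕ) (x : ℝ) : ℝ :=
  (Qf k x : ℝ) - x / (riemannZeta k).re

open ArithmeticFunction
open scoped ArithmeticFunction.Moebius ArithmeticFunction.zeta

lemma kfree_iff_no_prime {k n : ℕ} (hk : k ≠ 0) :
    KFree k n ↔ ∀ p : ℕ, p.Prime → ¬ p ^ k ∣ n := by
  constructor
  · exact fun h p hp => h p hp.one_lt
  · intro h d hd hdvd
    have hp := Nat.minFac_prime (by omega : d ≠ 1)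
    exact h d.minFac hp ((pow_dvd_pow_of_dvd (Nat.minFac_dvd d) k).trans hdvd)

open Classical in
lemma key_sum (k : ℕ) (hk : 2 ≤ k) {n : ℕ} (hn : 1 ≤ n) :
    ∑ e ∈ Finset.Icc 1 n, (if e ^ k ∣ n then (μ e : ℤ) else 0)
      = if KFree k n then 1 else 0 := by
  classical
  have hn0 : n ≠ 0 := by omega
  have hk0 : k ≠ 0 := by omega
  set S : Finset ℕ := n.primeFactors.filter (fun p => p ^ k ∣ n) with hS
  have hSp : ∀ p ∈ S, p.Prime := fun p hp =>
    Nat.prime_of_mem_primeFactors (Finset.mem_filter.mp hp).1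
  set r : ℕ := ∏ p ∈ S, p with hr
  have hrdvd : r ∣ n := Finset.prod_primes_dvd n (fun p hp => (hSp p hp).prime)
      (fun p hp => Nat.dvd_of_mem_primeFactors (Finset.mem_filter.mp hp).1)
  have hr0 : r ≠ 0 := fun h => hn0 (Nat.eq_zero_of_zero_dvd (h ▸ hrdvd))
  have hmemS : ∀ p : ℕ, p.Prime → p ^ k ∣ n → p ∈ S := by
    intro p hpp hpk
    exact Finset.mem_filter.mpr
      ⟨Nat.mem_primeFactors.mpr ⟨hpp, (dvd_pow_self p hk0).trans hpk, hn0⟩, hpk⟩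
  have hequiv : ∀ e : ℕ, Squarefree e → (e ^ k ∣ n ↔ e ∣ r) := by
    intro e he
    have he0 : e ≠ 0 := he.ne_zero
    constructor
    · intro hdvd
      have hsub : e.primeFactors ⊆ S := by
        intro p hp
        have hpp := Nat.prime_of_mem_primeFactors hp
        have hpe : p ∣ e := Nat.dvd_of_mem_primeFactors hp
        exact hmemS p hpp ((pow_dvd_pow_of_dvd hpe k).trans hdvd)
      calc e = ∏ p ∈ e.primeFactors, p := (Nat.prod_primeFactors_of_squarefree he).symm
        _ ∣ r := Finset.prod_dvd_prod_of_subset _ _ _ hsub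
    · intro hdvd
      rw [← Nat.factorization_le_iff_dvd (pow_ne_zero k he0) hn0]
      rw [Nat.factorization_pow]
      intro p
      simp only [Finsupp.smul_apply, smul_eq_mul]
      by_cases hpe : e.factorization p = 0
      · simp [hpe]
      · have hp : p ∈ e.primeFactors := by
          rw [← Nat.support_factorization]; exact Finsupp.mem_support_iff.mpr hpe
        have hpp := Nat.prime_of_mem_primeFactors hp
        have hpr : p ∣ r := (Nat.dvd_of_mem_primeFactors hp).trans hdvd
        have hpS : p ∈ S := by
          obtain ⟨q, hq, hpq⟩ := (hpp.prime.dvd_finset_prod_iff _).mp hpr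
          rwa [((Nat.prime_dvd_prime_iff_eq hpp (hSp q hq)).mp hpq)]
        have hkn : k ≤ n.factorization p :=
          (hpp.pow_dvd_iff_le_factorization hn0).mp (Finset.mem_filter.mp hpS).2
        have h1 : e.factorization p ≤ 1 := he.natFactorization_le_one p
        nlinarith
  -- rewrite both sides
  have lhs_eq : ∑ e ∈ Finset.Icc 1 n, (if e ^ k ∣ n then (μ e : ℤ) else 0)
      = ∑ e ∈ r.divisors, (μ e : ℤ) := by
    rw [← Finset.sum_filter]
    rw [← Finset.sum_filter_of_ne (p := fun e => Squarefree e)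
      (fun x _ h => moebius_ne_zero_iff_squarefree.mp h)]
    rw [← Finset.sum_filter_of_ne (s := r.divisors) (p := fun e => Squarefree e)
      (f := fun e => (μ e : ℤ)) (fun x _ h => moebius_ne_zero_iff_squarefree.mp h)]
    apply Finset.sum_congr _ (fun _ _ => rfl)
    ext e
    simp only [Finset.mem_filter, Finset.mem_Icc, Nat.mem_divisors]
    constructor
    · rintro ⟨⟨⟨h1, h2⟩, h3⟩, h4⟩
      exact ⟨⟨(hequiv e h4).mp h3, hr0⟩, h4⟩
    · rintro ⟨⟨h1, _⟩, h4⟩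
      have he0 : e ≠ 0 := h4.ne_zero
      refine ⟨⟨⟨by omega, Nat.le_of_dvd (by omega) (h1.trans hrdvd)⟩, (hequiv e h4).mpr h1⟩, h4⟩
  rw [lhs_eq]
  have h2 : (μ * ↑ζ : ArithmeticFunction ℤ) r = (1 : ArithmeticFunction ℤ) r := by
    rw [moebius_mul_coe_zeta]
  rw [coe_mul_zeta_apply, ArithmeticFunction.one_apply] at h2
  rw [h2]
  congr 1
  rw [eq_iff_iff, kfree_iff_no_prime hk0]
  constructor
  · intro h1 p hpp hpk
    have hpS : p ∈ S := hmemS p hpp hpk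
    have hd : p ∣ r := Finset.dvd_prod_of_mem _ hpS
    rw [h1] at hd
    have := Nat.le_of_dvd one_pos hd
    have := hpp.two_le
    omega
  · intro h
    have hSe : S = ∅ := by
      rw [Finset.eq_empty_iff_forall_notMem]
      intro p hp
      exact h p (hSp p hp) (Finset.mem_filter.mp hp).2
    rw [hr, hSe, Finset.prod_empty]

open Classical in
lemma count_eq (k : ℕ) (hk : 2 ≤ k) (N : ℕ) :
    (((Finset.Icc 1 N).filter fun n => KFree k n).card : ℤ)
      = ∑ e ∈ Finset.range (N + 1), (μ e : ℤ) * (N / e ^ k : ℕ) := by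
  have hk0 : k ≠ 0 := by omega
  have step1 : (((Finset.Icc 1 N).filter fun n => KFree k n).card : ℤ)
      = ∑ n ∈ Finset.Icc 1 N, (if KFree k n then (1:ℤ) else 0) := by
    rw [Finset.card_filter]
    push_cast
    rfl
  have step2 : ∀ n ∈ Finset.Icc 1 N, (if KFree k n then (1:ℤ) else 0)
      = ∑ e ∈ Finset.Icc 1 N, (if e ^ k ∣ n then (μ e : ℤ) else 0) := by
    intro n hn
    rw [Finset.mem_Icc] at hn
    rw [← key_sum k hk hn.1]
    apply Finset.sum_subset (Finset.Icc_subset_Icc_right hn.2)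
    intro e he hne
    rw [Finset.mem_Icc] at he hne
    rw [if_neg]
    intro hdvd
    have h1 : e ^ k ≤ n := Nat.le_of_dvd (by omega) hdvd
    have h2 : e ≤ e ^ k := Nat.le_self_pow hk0 e
    omega
  have step3 : ∀ e : ℕ, ∑ n ∈ Finset.Icc 1 N, (if e ^ k ∣ n then (μ e : ℤ) else 0)
      = (μ e : ℤ) * (N / e ^ k : ℕ) := by
    intro e
    rw [← Finset.sum_filter, Finset.sum_const]
    have : Finset.Icc 1 N = Finset.Ioc 0 N := rfl
    rw [this, Nat.Ioc_filter_dvd_card_eq_div]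
    rw [nsmul_eq_mul, mul_comm]
  rw [step1, Finset.sum_congr rfl step2, Finset.sum_comm]
  rw [Finset.sum_congr rfl (fun e _ => step3 e)]
  apply Finset.sum_subset
  · intro e he
    rw [Finset.mem_Icc] at he
    rw [Finset.mem_range]
    omega
  · intro e he hne
    rw [Finset.mem_range] at he
    rw [Finset.mem_Icc] at hne
    have : e = 0 := by omega
    simp [this]

lemma real_limit (k : ℕ) (hk : 2 ≤ k) :
    Tendsto (fun x : ℝ => (Qf k x : ℝ) / x) atTop
      (nhds (∑' e : ℕ, (μ e : ℝ) / (e : ℝ) ^ k)) := by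
  have hk0 : k ≠ 0 := by omega
  set g : ℕ → ℝ := fun e => 1 / (e : ℝ) ^ k with hgdef
  set f : ℕ → ℝ := fun e => (μ e : ℝ) / (e : ℝ) ^ k with hfdef
  have hg : Summable g := Real.summable_one_div_nat_pow.mpr (by omega)
  have hgnn : ∀ e, 0 ≤ g e := fun e => by positivity
  have hmu1 : ∀ e : ℕ, |(μ e : ℝ)| ≤ 1 := by
    intro e
    have := @abs_moebius_le_one e
    exact_mod_cast this
  have habs : ∀ e, |f e| ≤ g e := by
    intro e
    by_cases he : e = 0
    · simp [hfdef, hgdef, he, zero_pow hk0]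
    · have hq : (0:ℝ) < (e:ℝ) ^ k := by positivity
      rw [hfdef, hgdef]
      simp only
      rw [abs_div, abs_of_pos hq]
      gcongr
      exact hmu1 e
  have hf : Summable f :=
    Summable.of_norm_bounded hg (fun e => by simpa [Real.norm_eq_abs] using habs e)
  set c : ℝ := ∑' e : ℕ, f e with hcdef
  rw [Metric.tendsto_atTop]
  intro ε hε
  have hε3 : (0:ℝ) < ε / 3 := by linarith
  obtain ⟨s, hs⟩ : ∃ s : ℕ, ∑' i : ℕ, g (i + s) < ε / 3 :=
    ((tendsto_sum_nat_add g).eventually_lt_const hε3).exists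
  have hgs : Summable fun i : ℕ => g (i + s) := (summable_nat_add_iff s).mpr hg
  have hfs : Summable fun i : ℕ => f (i + s) := (summable_nat_add_iff s).mpr hf
  have htail_nn : 0 ≤ ∑' i : ℕ, g (i + s) := tsum_nonneg (fun i => hgnn _)
  have hPc : |∑ e ∈ Finset.range s, f e - c| ≤ ∑' i : ℕ, g (i + s) := by
    have hdecomp := Summable.sum_add_tsum_nat_add s hf
    have heq : ∑ e ∈ Finset.range s, f e - c = -(∑' i : ℕ, f (i + s)) := by
      rw [hcdef, ← hdecomp]; ring
    rw [heq, abs_neg]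
    have habs' : Summable fun i : ℕ => |f (i + s)| := hfs.abs
    calc |∑' i : ℕ, f (i + s)| ≤ ∑' i : ℕ, |f (i + s)| := by
          have h5 := norm_tsum_le_tsum_norm (f := fun i : ℕ => f (i + s))
            (by simpa [Real.norm_eq_abs] using habs')
          simpa [Real.norm_eq_abs] using h5
      _ ≤ ∑' i : ℕ, g (i + s) := Summable.tsum_le_tsum (fun i => habs _) habs' hgs
  refine ⟨max ((s:ℝ) + 1) (6 * s / ε + 1), fun x hx => ?_⟩
  have hxs : (s:ℝ) + 1 ≤ x := le_trans (le_max_left _ _) hx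
  have hxe : 6 * s / ε + 1 ≤ x := le_trans (le_max_right _ _) hx
  have hsnn : (0:ℝ) ≤ (s:ℝ) := Nat.cast_nonneg s
  have hx1 : (1:ℝ) ≤ x := by linarith
  have hx0 : (0:ℝ) < x := by linarith
  set N : ℕ := ⌊x⌋₊ with hNdef
  have hxN : (N:ℝ) ≤ x := Nat.floor_le (by linarith)
  have hNx : x < (N:ℝ) + 1 := Nat.lt_floor_add_one x
  have hNs : s ≤ N := Nat.le_floor (by push_cast; linarith)
  have hQ : (Qf k x : ℝ)
      = ∑ e ∈ Finset.range (N + 1), (μ e : ℝ) * ((N / e ^ k : ℕ) : ℝ) := by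
    have h2 := congrArg (fun z : ℤ => (z : ℝ)) (count_eq k hk N)
    simp only [Int.cast_sum, Int.cast_mul, Int.cast_natCast] at h2
    rw [Qf]
    exact h2
  set P : ℝ := ∑ e ∈ Finset.range s, f e with hPdef
  set A : ℝ := ∑ e ∈ Finset.range s, (μ e : ℝ) * ((N / e ^ k : ℕ) : ℝ) with hAdef
  set B : ℝ := ∑ e ∈ Finset.Ico s (N + 1), (μ e : ℝ) * ((N / e ^ k : ℕ) : ℝ) with hBdef
  have hAB : (Qf k x : ℝ) = A + B := by
    rw [hQ, hAdef, hBdef, Finset.sum_range_add_sum_Ico _ (by omega : s ≤ N + 1)]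
  have hdle : ∀ e : ℕ, ((N / e ^ k : ℕ) : ℝ) ≤ (N : ℝ) / (e : ℝ) ^ k := by
    intro e
    have := Nat.cast_div_le (α := ℝ) (m := N) (n := e ^ k)
    push_cast at this
    exact this
  -- Bound 1
  have hbound1 : |A - x * P| ≤ 2 * s := by
    rw [hAdef, hPdef, Finset.mul_sum, ← Finset.sum_sub_distrib]
    refine le_trans (Finset.abs_sum_le_sum_abs _ _) ?_
    have hterm : ∀ e ∈ Finset.range s,
        |(μ e : ℝ) * ((N / e ^ k : ℕ) : ℝ) - x * f e| ≤ 2 := by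
      intro e _
      by_cases he : e = 0
      · simp [hfdef, he, zero_pow hk0, Nat.div_zero]
      · have he1 : 1 ≤ e := Nat.one_le_iff_ne_zero.mpr he
        have hq0 : (0:ℝ) < (e:ℝ) ^ k := by positivity
        have hq1 : (1:ℝ) ≤ (e:ℝ) ^ k := one_le_pow₀ (by exact_mod_cast he1)
        have hd_lt : (N:ℝ) < (((N / e ^ k : ℕ) : ℝ) + 1) * (e:ℝ) ^ k := by
          have h := (Nat.div_lt_iff_lt_mul (by positivity : 0 < e ^ k)).mp
            (Nat.lt_succ_self (N / e ^ k))
          have h2 : (N:ℝ) < (((N / e ^ k + 1) * e ^ k : ℕ) : ℝ) := by exact_mod_cast h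
          push_cast at h2
          linarith
        have habs2 : |((N / e ^ k : ℕ) : ℝ) - x / (e:ℝ) ^ k| ≤ 2 := by
          rw [abs_le]
          constructor
          · have hx2 : x < (((N / e ^ k : ℕ) : ℝ) + 2) * (e:ℝ) ^ k := by nlinarith
            have h3 := (div_lt_iff₀ hq0).mpr hx2
            linarith
          · have h4 : ((N / e ^ k : ℕ) : ℝ) ≤ x / (e:ℝ) ^ k :=
              le_trans (hdle e) (by gcongr)
            linarith
        have heq : (μ e : ℝ) * ((N / e ^ k : ℕ) : ℝ) - x * f e
            = (μ e : ℝ) * (((N / e ^ k : ℕ) : ℝ) - x / (e:ℝ) ^ k) := by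
          rw [hfdef]; ring
        rw [heq, abs_mul]
        calc |(μ e : ℝ)| * |((N / e ^ k : ℕ) : ℝ) - x / (e:ℝ) ^ k| ≤ 1 * 2 :=
              mul_le_mul (hmu1 e) habs2 (abs_nonneg _) zero_le_one
          _ = 2 := one_mul 2
    refine le_trans (Finset.sum_le_card_nsmul _ _ 2 hterm) ?_
    rw [Finset.card_range, nsmul_eq_mul]
    linarith
  -- Bound 2
  have hbound2 : |B| ≤ x * (ε / 3) := by
    have h1 : |B| ≤ ∑ e ∈ Finset.Ico s (N + 1), x * g e := by
      refine le_trans (Finset.abs_sum_le_sum_abs _ _) (Finset.sum_le_sum ?_)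
      intro e _
      by_cases he0 : e = 0
      · have hz : ((N / e ^ k : ℕ) : ℝ) = 0 := by
          rw [he0, zero_pow hk0, Nat.div_zero, Nat.cast_zero]
        rw [hz, mul_zero, abs_zero]
        positivity
      · have hq0 : (0:ℝ) < (e:ℝ) ^ k := by positivity
        rw [abs_mul]
        calc |(μ e : ℝ)| * |((N / e ^ k : ℕ) : ℝ)| ≤ 1 * ((N:ℝ) / (e:ℝ) ^ k) := by
              refine mul_le_mul (hmu1 e) ?_ (abs_nonneg _) zero_le_one
              rw [abs_of_nonneg (Nat.cast_nonneg _)]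
              exact hdle e
          _ = (N:ℝ) / (e:ℝ) ^ k := one_mul _
          _ ≤ x / (e:ℝ) ^ k := by gcongr
          _ = x * g e := by rw [hgdef]; field_simp
    have h2 : ∑ e ∈ Finset.Ico s (N + 1), g e ≤ ∑' i : ℕ, g (i + s) := by
      rw [Finset.sum_Ico_eq_sum_range]
      refine le_trans (le_of_eq (Finset.sum_congr rfl (fun j _ => by rw [add_comm]))) ?_
      exact Summable.sum_le_tsum _ (fun i _ => hgnn _) hgs
    calc |B| ≤ ∑ e ∈ Finset.Ico s (N + 1), x * g e := h1
      _ = x * ∑ e ∈ Finset.Ico s (N + 1), g e := by rw [Finset.mul_sum]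
      _ ≤ x * (ε / 3) :=
          mul_le_mul_of_nonneg_left (le_of_lt (lt_of_le_of_lt h2 hs)) hx0.le
  -- combine
  have hkey : |(Qf k x : ℝ) - x * c| ≤ 2 * s + x * (ε / 3) + x * (ε / 3) := by
    have hsplit : (Qf k x : ℝ) - x * c = (A - x * P) + B + x * (P - c) := by
      rw [hAB]; ring
    rw [hsplit]
    have t1 : |(A - x * P) + B + x * (P - c)| ≤ |A - x * P| + |B| + |x * (P - c)| := by
      calc |(A - x * P) + B + x * (P - c)| ≤ |(A - x * P) + B| + |x * (P - c)| := abs_add_le _ _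
        _ ≤ |A - x * P| + |B| + |x * (P - c)| := by linarith [abs_add_le (A - x * P) B]
    have t2 : |x * (P - c)| ≤ x * (ε / 3) := by
      rw [abs_mul, abs_of_pos hx0]
      exact mul_le_mul_of_nonneg_left (le_of_lt (lt_of_le_of_lt hPc hs)) hx0.le
    linarith
  rw [Real.dist_eq]
  have hfrac : (Qf k x : ℝ) / x - c = ((Qf k x : ℝ) - x * c) / x := by
    field_simp
  rw [hfrac, abs_div, abs_of_pos hx0, div_lt_iff₀ hx0]
  have h6 : 6 * (s:ℝ) < ε * x := by
    have he1 : ε * (6 * s / ε + 1) = 6 * s + ε := by field_simp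
    have he2 : ε * (6 * s / ε + 1) ≤ ε * x := mul_le_mul_of_nonneg_left hxe hε.le
    linarith
  linarith

theorem kfree_density (k : ℕ) (hk : 2 ≤ k) :
    Tendsto (fun x : ℝ => (Qf k x : ℂ) / (x : ℂ)) atTop
      (nhds (1 / riemannZeta k)) := by
  have hs : 1 < ((k : ℂ)).re := by
    have : ((k : ℂ)).re = (k : ℝ) := by simp
    rw [this]
    exact_mod_cast (by omega : 1 < k)
  have hζ : riemannZeta k ≠ 0 := riemannZeta_ne_zero_of_one_lt_re hs
  have hc : ((∑' e : ℕ, (μ e : ℝ) / (e : ℝ) ^ k : ℝ) : ℂ) = 1 / riemannZeta k := by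
    have hL : LSeries (fun n => ((μ n : ℤ) : ℂ)) k = 1 / riemannZeta k := by
      have h1 := LSeries_zeta_mul_Lseries_moebius hs
      rw [LSeries_zeta_eq_riemannZeta hs] at h1
      rw [eq_div_iff hζ, mul_comm]
      exact h1
    rw [← hL, Complex.ofReal_tsum, LSeries]
    congr 1
    ext n
    rw [LSeries.term_def]
    by_cases hn : n = 0
    · simp [hn, zero_pow (by omega : k ≠ 0)]
    · rw [if_neg hn, Complex.cpow_natCast]
      push_cast
      rfl
  have hreal := real_limit k hk
  have hcomp := (Complex.continuous_ofReal.tendsto _).comp hreal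
  rw [hc] at hcomp
  refine hcomp.congr fun x => ?_
  simp only [Function.comp_apply, Complex.ofReal_div, Complex.ofReal_natCast]
end

section
/- For every integer k ≥ 2, the error term R_k(x) = Q_k(x) − x/ζ(k) satisfies R_k(x) = O(x^{1/k}). -/
open Filter MeasureTheory Finset

namespace RkAux

open ArithmeticFunction
open scoped ArithmeticFunction.Moebius

/-! ### Combinatorial part -/

/-- `∏ p^(v_p(n)/k)`: the largest `m` with `m^k ∣ n`. -/
def mF (k n : ℕ) : ℕ := ∏ p ∈ n.primeFactors, p ^ (n.factorization p / k)

lemma mF_ne_zero {k n : ℕ} : mF k n ≠ 0 := by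
  refine Finset.prod_ne_zero_iff.mpr fun p hp => ?_
  exact pow_ne_zero _ (Nat.prime_of_mem_primeFactors hp).pos.ne'

lemma mF_factorization {k n : ℕ} (q : ℕ) :
    (mF k n).factorization q = n.factorization q / k := by
  rw [mF, Nat.factorization_prod
    (fun p hp => pow_ne_zero _ (Nat.prime_of_mem_primeFactors hp).pos.ne')]
  rw [Finset.sum_apply']
  rw [Finset.sum_congr rfl (fun p hp => by
    rw [Nat.Prime.factorization_pow (Nat.prime_of_mem_primeFactors hp), Finsupp.single_apply])]
  rw [Finset.sum_ite_eq' n.primeFactors q (fun p => n.factorization p / k)]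
  split_ifs with h
  · rfl
  · rw [Finsupp.notMem_support_iff.mp (by rwa [Nat.support_factorization]), Nat.zero_div]

lemma dvd_mF_iff {k n d : ℕ} (hk : 0 < k) (hn : n ≠ 0) (hd : d ≠ 0) :
    d ∣ mF k n ↔ d ^ k ∣ n := by
  rw [← Nat.factorization_le_iff_dvd hd mF_ne_zero,
      ← Nat.factorization_le_iff_dvd (pow_ne_zero _ hd) hn, Nat.factorization_pow,
      Finsupp.le_def, Finsupp.le_def]
  constructor
  · intro h q
    have := h q
    rw [mF_factorization, Nat.le_div_iff_mul_le hk] at this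
    simpa [mul_comm] using this
  · intro h q
    rw [mF_factorization, Nat.le_div_iff_mul_le hk]
    simpa [mul_comm] using h q

lemma mF_eq_one_iff {k n : ℕ} (hk : 0 < k) (hn : n ≠ 0) :
    mF k n = 1 ↔ KFree k n := by
  constructor
  · intro h d hd hdvd
    have : d ∣ mF k n := (dvd_mF_iff hk hn (by omega)).mpr hdvd
    rw [h, Nat.dvd_one] at this; omega
  · intro h
    by_contra hne
    have h1 : 1 < mF k n := by have := mF_ne_zero (k := k) (n := n); omega
    exact h _ h1 ((dvd_mF_iff hk hn (by omega)).mp dvd_rfl)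

lemma filter_pow_dvd_eq_divisors {k n N : ℕ} (hk : 0 < k) (hn : 0 < n) (hN : n ≤ N) :
    (Finset.Icc 1 N).filter (fun d => d ^ k ∣ n) = (mF k n).divisors := by
  ext d
  simp only [Finset.mem_filter, Finset.mem_Icc, Nat.mem_divisors]
  constructor
  · rintro ⟨⟨h1, -⟩, h2⟩
    exact ⟨(dvd_mF_iff hk hn.ne' (by omega)).mpr h2, mF_ne_zero⟩
  · rintro ⟨h1, -⟩
    have hd0 : d ≠ 0 := by rintro rfl; exact mF_ne_zero (Nat.eq_zero_of_zero_dvd h1)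
    have h2 : d ^ k ∣ n := (dvd_mF_iff hk hn.ne' hd0).mp h1
    have hdn : d ≤ n := Nat.le_of_dvd hn (dvd_trans (dvd_pow_self d hk.ne') h2)
    exact ⟨⟨by omega, le_trans hdn hN⟩, h2⟩

lemma sum_moebius_divisors (m : ℕ) :
    ∑ d ∈ m.divisors, μ d = if m = 1 then 1 else 0 := by
  rw [← coe_mul_zeta_apply, moebius_mul_coe_zeta, one_apply]

open Classical in
lemma moebius_indicator {k n N : ℕ} (hk : 0 < k) (hn : 0 < n) (hN : n ≤ N) :
    ∑ d ∈ Finset.Icc 1 N, (if d ^ k ∣ n then μ d else 0) =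
      if KFree k n then 1 else 0 := by
  rw [← Finset.sum_filter, filter_pow_dvd_eq_divisors hk hn hN, sum_moebius_divisors]
  exact if_congr (mF_eq_one_iff hk hn.ne') rfl rfl

open Classical in
lemma Qf_eq_full (k : ℕ) (hk : 0 < k) (x : ℝ) :
    (Qf k x : ℤ) = ∑ d ∈ Finset.Icc 1 ⌊x⌋₊, μ d * (⌊x⌋₊ / d ^ k : ℕ) := by
  set N := ⌊x⌋₊
  have h1 : (Qf k x : ℤ) = ∑ n ∈ Finset.Icc 1 N, (if KFree k n then (1 : ℤ) else 0) := by
    rw [Qf, Finset.card_filter]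
    exact_mod_cast rfl
  rw [h1]
  have h2 : ∀ n ∈ Finset.Icc 1 N, (if KFree k n then (1 : ℤ) else 0) =
      ∑ d ∈ Finset.Icc 1 N, (if d ^ k ∣ n then μ d else 0) := by
    intro n hn
    rw [Finset.mem_Icc] at hn
    exact (moebius_indicator hk (by omega) hn.2).symm
  rw [Finset.sum_congr rfl h2, Finset.sum_comm]
  refine Finset.sum_congr rfl fun d _ => ?_
  rw [← Finset.sum_filter]
  have : ((Finset.Icc 1 N).filter (fun n => d ^ k ∣ n)).card = N / d ^ k := by
    have hIcc : Finset.Icc 1 N = Finset.Ioc 0 N := by ext a; simp; omega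
    rw [hIcc]
    exact Nat.Ioc_filter_dvd_card_eq_div N (d ^ k)
  rw [Finset.sum_const, ← this]
  push_cast
  ring

lemma floor_div_pow_eq_zero {k : ℕ} (hk : 0 < k) {x : ℝ} (hx : 0 ≤ x) {d : ℕ}
    (hd : ⌊x ^ ((1:ℝ)/k)⌋₊ < d) : ⌊x⌋₊ / d ^ k = 0 := by
  apply Nat.div_eq_of_lt
  have h1 : x ^ ((1:ℝ)/k) < d := (Nat.floor_lt (Real.rpow_nonneg hx _)).mp hd
  have h2 : (x ^ ((1:ℝ)/k)) ^ (k : ℕ) = x := by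
    rw [← Real.rpow_natCast (x ^ ((1:ℝ)/k)) k, ← Real.rpow_mul hx,
      one_div_mul_cancel (by exact_mod_cast hk.ne' : (k:ℝ) ≠ 0), Real.rpow_one]
  have h3 : x < (d : ℝ) ^ (k : ℕ) := by
    calc x = (x ^ ((1:ℝ)/k)) ^ (k:ℕ) := h2.symm
    _ < (d:ℝ) ^ (k:ℕ) := pow_lt_pow_left₀ h1 (Real.rpow_nonneg hx _) hk.ne'
  have h4 : (⌊x⌋₊ : ℝ) ≤ x := Nat.floor_le hx
  have := h4.trans_lt h3
  exact_mod_cast this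

lemma Qf_eq_trunc (k : ℕ) (hk : 0 < k) (x : ℝ) (hx : 1 ≤ x) :
    (Qf k x : ℤ) = ∑ d ∈ Finset.Icc 1 ⌊x ^ ((1:ℝ)/k)⌋₊, μ d * (⌊x⌋₊ / d ^ k : ℕ) := by
  rw [Qf_eq_full k hk x]
  have hDN : ⌊x ^ ((1:ℝ)/k)⌋₊ ≤ ⌊x⌋₊ := by
    apply Nat.floor_le_floor
    calc x ^ ((1:ℝ)/k) ≤ x ^ (1:ℝ) := by
          apply Real.rpow_le_rpow_of_exponent_le hx
          rw [div_le_one (by positivity)]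
          exact_mod_cast hk
      _ = x := Real.rpow_one x
  symm
  apply Finset.sum_subset (Finset.Icc_subset_Icc_right hDN)
  intro d hd hd'
  simp only [Finset.mem_Icc] at hd hd'
  rw [floor_div_pow_eq_zero hk (by linarith) (by omega)]
  simp

/-! ### Analytic part -/

noncomputable def gM (k : ℕ) (d : ℕ) : ℝ := (μ d : ℝ) / (d : ℝ) ^ k

lemma summable_abs_gM {k : ℕ} (hk : 2 ≤ k) : Summable fun d => |gM k d| := by
  apply Summable.of_nonneg_of_le (fun d => abs_nonneg _) (fun d => ?_)
    (Real.summable_one_div_nat_pow.mpr hk)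
  rcases Nat.eq_zero_or_pos d with rfl | hd
  · simp [gM]
  · rw [gM, abs_div, abs_of_nonneg (by positivity : (0:ℝ) ≤ (d:ℝ)^k)]
    apply div_le_div_of_nonneg_right ?_ (by positivity)
    rw [← Int.cast_abs]
    exact_mod_cast abs_moebius_le_one

lemma summable_gM {k : ℕ} (hk : 2 ≤ k) : Summable (gM k) :=
  (summable_abs_gM hk).of_abs

lemma zeta_inv_eq {k : ℕ} (hk : 2 ≤ k) :
    (riemannZeta k)⁻¹ = ((∑' d, gM k d : ℝ) : ℂ) := by
  have hre : 1 < (k : ℂ).re := by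
    simp only [Complex.natCast_re]
    exact_mod_cast hk.trans_lt' one_lt_two
  have h1 : LSeries (fun n => (μ n : ℂ)) k = (riemannZeta k)⁻¹ := by
    have := LSeries_zeta_mul_Lseries_moebius (s := (k:ℂ)) hre
    rw [LSeries_zeta_eq_riemannZeta hre] at this
    exact eq_inv_of_mul_eq_one_left (by rwa [mul_comm] at this)
  rw [← h1, LSeries, Complex.ofReal_tsum]
  refine tsum_congr fun n => ?_
  rcases Nat.eq_zero_or_pos n with rfl | hn
  · simp [gM, LSeries.term_zero]
  · rw [LSeries.term_of_ne_zero hn.ne', gM, Complex.cpow_natCast]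
    push_cast
    ring

lemma div_zeta_re {k : ℕ} (hk : 2 ≤ k) (x : ℝ) :
    x / (riemannZeta k).re = x * ∑' d, gM k d := by
  have h := zeta_inv_eq hk
  have h2 : riemannZeta k = (((∑' d, gM k d : ℝ)⁻¹ : ℝ) : ℂ) := by
    rw [Complex.ofReal_inv, ← h, inv_inv]
  rw [h2, Complex.ofReal_re, div_eq_mul_inv, inv_inv]

lemma gM_term_bound {k D : ℕ} (hk : 2 ≤ k) (hD : 1 ≤ D) (i : ℕ) :
    |gM k (i + (D + 1))| ≤
      ((1:ℝ)/D) ^ (k - 2) * (1/((i:ℝ) + D) - 1/(((i+1:ℕ):ℝ) + D)) := by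
  set a : ℝ := (i : ℝ) + D with ha_def
  have haD : (D : ℝ) ≤ a := le_add_of_nonneg_left (Nat.cast_nonneg i)
  have ha1 : (1:ℝ) ≤ a := le_trans (by exact_mod_cast hD) haD
  have ha0 : 0 < a := by linarith
  have hstep : 1/a - 1/(((i+1:ℕ):ℝ) + D) = 1/(a*(a+1)) := by
    push_cast
    rw [show (i:ℝ) + 1 + D = a + 1 by ring]
    field_simp
    ring
  rw [hstep]
  have hcast : ((i + (D+1) : ℕ) : ℝ) = a + 1 := by push_cast; ring
  have h1 : |gM k (i + (D+1))| ≤ 1/(a+1)^k := by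
    rw [gM, abs_div, hcast, abs_of_nonneg (by positivity : (0:ℝ) ≤ (a+1)^k)]
    apply div_le_div_of_nonneg_right ?_ (by positivity)
    rw [← Int.cast_abs]
    exact_mod_cast abs_moebius_le_one
  refine h1.trans ?_
  have hD0 : (0:ℝ) < D := by exact_mod_cast hD
  have hkeq : (a+1)^k = (a+1)^(k-2) * ((a+1)*(a+1)) := by
    conv_lhs => rw [show k = (k-2)+2 by omega]
    rw [pow_add]
    ring
  have key : (D:ℝ)^(k-2) * (a*(a+1)) ≤ (a+1)^k := by
    rw [hkeq]
    have h2 : (D:ℝ)^(k-2) ≤ (a+1)^(k-2) := pow_le_pow_left₀ (le_of_lt hD0) (by linarith) _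
    have h3 : a * (a+1) ≤ (a+1)*(a+1) := by nlinarith
    exact mul_le_mul h2 h3 (by positivity) (by positivity)
  calc 1/(a+1)^k ≤ 1/((D:ℝ)^(k-2)*(a*(a+1))) :=
        one_div_le_one_div_of_le (by positivity) key
    _ = ((1:ℝ)/D)^(k-2) * (1/(a*(a+1))) := by
        rw [one_div_pow, one_div_mul_one_div]

lemma gM_tail_bound {k D : ℕ} (hk : 2 ≤ k) (hD : 1 ≤ D) :
    |∑' i : ℕ, gM k (i + (D + 1))| ≤ ((1:ℝ)/D) ^ (k - 1) := by
  have hsum : Summable fun i => |gM k (i + (D+1))| :=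
    (summable_nat_add_iff (f := fun d => |gM k d|) (D+1)).mpr (summable_abs_gM hk)
  have h1 : |∑' i : ℕ, gM k (i + (D + 1))| ≤ ∑' i : ℕ, |gM k (i + (D+1))| := by
    simpa [Real.norm_eq_abs] using norm_tsum_le_tsum_norm (f := fun i => gM k (i + (D+1))) hsum
  refine h1.trans ?_
  apply Summable.tsum_le_of_sum_le hsum
  intro s
  set f : ℕ → ℝ := fun j => 1/((j:ℝ) + D) with hf
  obtain ⟨M, hM⟩ := s.exists_nat_subset_range
  have hD0 : (0:ℝ) < D := by exact_mod_cast hD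
  calc ∑ i ∈ s, |gM k (i + (D+1))|
      ≤ ∑ i ∈ Finset.range M, |gM k (i + (D+1))| :=
        Finset.sum_le_sum_of_subset_of_nonneg hM (fun i _ _ => abs_nonneg _)
    _ ≤ ∑ i ∈ Finset.range M, ((1:ℝ)/D) ^ (k-2) * (f i - f (i+1)) := by
        refine Finset.sum_le_sum fun i _ => ?_
        have h := gM_term_bound hk hD i
        rw [hf]
        push_cast at h ⊢
        convert h using 3
    _ = ((1:ℝ)/D) ^ (k-2) * (f 0 - f M) := by
        rw [← Finset.mul_sum, Finset.sum_range_sub' f M]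
    _ ≤ ((1:ℝ)/D) ^ (k-2) * ((1:ℝ)/D) := by
        apply mul_le_mul_of_nonneg_left ?_ (by positivity)
        have h0 : f 0 = 1/(D:ℝ) := by rw [hf]; norm_num
        have hMpos : (0:ℝ) ≤ f M := by rw [hf]; positivity
        rw [h0]
        linarith
    _ = ((1:ℝ)/D) ^ (k-1) := by
        rw [← pow_succ]
        congr 1
        omega

/-! ### Main estimate -/

lemma Rf_bound {k : ℕ} (hk : 2 ≤ k) {x : ℝ} (hx : (2:ℝ)^k ≤ x) :
    |Rf k x| ≤ (1 + 2^(k-1)) * x ^ ((1:ℝ)/k) := by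
  have hk0 : 0 < k := by omega
  have hx1 : (1:ℝ) ≤ x := le_trans (one_le_pow₀ one_le_two) hx
  have hx0 : (0:ℝ) ≤ x := by linarith
  set y : ℝ := x ^ ((1:ℝ)/k) with hy_def
  have hy0 : 0 ≤ y := Real.rpow_nonneg hx0 _
  have hyk : y ^ (k:ℕ) = x := by
    rw [hy_def, ← Real.rpow_natCast (x ^ ((1:ℝ)/k)) k, ← Real.rpow_mul hx0,
      one_div_mul_cancel (by exact_mod_cast hk0.ne' : (k:ℝ) ≠ 0), Real.rpow_one]
  have hy2 : (2:ℝ) ≤ y := by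
    by_contra hlt
    push_neg at hlt
    have : y ^ (k:ℕ) < 2 ^ (k:ℕ) := pow_lt_pow_left₀ hlt hy0 hk0.ne'
    rw [hyk] at this
    linarith
  set D : ℕ := ⌊y⌋₊ with hD_def
  have hD2 : 2 ≤ D := Nat.le_floor (by exact_mod_cast hy2)
  have hD1 : 1 ≤ D := by omega
  have hDy : (D:ℝ) ≤ y := Nat.floor_le hy0
  have hDy2 : y/2 < (D:ℝ) := by
    have := Nat.sub_one_lt_floor y
    rw [← hD_def] at this
    linarith
  have hD0 : (0:ℝ) < D := by positivity
  set N : ℕ := ⌊x⌋₊ with hN_def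
  set S : ℝ := ∑' d, gM k d with hS_def
  set T : ℝ := ∑' i : ℕ, gM k (i + (D + 1)) with hT_def
  -- split the series
  have hsplit : S = (∑ d ∈ Finset.Icc 1 D, gM k d) + T := by
    have h := Summable.sum_add_tsum_nat_add (f := gM k) (D+1) (summable_gM hk)
    have hset : Finset.range (D+1) = insert 0 (Finset.Icc 1 D) := by
      ext a; simp; omega
    rw [hset, Finset.sum_insert (by simp)] at h
    have hg0 : gM k 0 = 0 := by simp [gM]
    rw [hg0, zero_add] at h
    rw [hS_def, hT_def, ← h]
  -- main identity
  have hQ : (Qf k x : ℝ) = ∑ d ∈ Finset.Icc 1 D, (μ d : ℝ) * (N / d ^ k : ℕ) := by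
    have h := Qf_eq_trunc k hk0 x hx1
    rw [hD_def, hN_def, hy_def]
    have h2 := congrArg (fun z : ℤ => (z : ℝ)) h
    simp only [Int.cast_sum, Int.cast_mul, Int.cast_natCast] at h2
    exact_mod_cast h2
  have hmain : Rf k x = (∑ d ∈ Finset.Icc 1 D,
      (μ d : ℝ) * ((N / d ^ k : ℕ) - x / (d:ℝ)^k)) - x * T := by
    rw [Rf, div_zeta_re hk, hQ, ← hS_def, hsplit, mul_add, Finset.mul_sum]
    have hterm : ∀ d ∈ Finset.Icc 1 D, (μ d : ℝ) * ((N / d ^ k : ℕ) - x / (d:ℝ)^k)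
        = (μ d : ℝ) * (N / d ^ k : ℕ) - x * gM k d := by
      intro d _
      rw [gM]
      ring
    rw [Finset.sum_congr rfl hterm, Finset.sum_sub_distrib]
    ring
  -- bound each floor-error term by 1
  have hNd : ∀ d ∈ Finset.Icc 1 D, |(μ d : ℝ) * ((N / d ^ k : ℕ) - x / (d:ℝ)^k)| ≤ 1 := by
    intro d hd
    rw [Finset.mem_Icc] at hd
    have hd1 : 1 ≤ d := hd.1
    have hdk0 : (0:ℝ) < (d:ℝ)^k := by positivity
    have ht0 : 0 ≤ x / (d:ℝ)^k := by positivity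
    have hfl : ((N / d ^ k : ℕ) : ℝ) = (⌊x / ((d:ℝ))^k⌋₊ : ℝ) := by
      rw [hN_def, ← Nat.floor_div_natCast x (d^k)]
      congr 2
      push_cast
      ring
    rw [abs_mul]
    have h1 : |(μ d : ℝ)| ≤ 1 := by
      rw [← Int.cast_abs]
      exact_mod_cast abs_moebius_le_one
    have h2 : |((N / d ^ k : ℕ) : ℝ) - x / (d:ℝ)^k| ≤ 1 := by
      rw [hfl]
      set t := x / (d:ℝ)^k with ht_def
      have hf1 : (⌊t⌋₊ : ℝ) ≤ t := Nat.floor_le ht0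
      have hf2 : t < ⌊t⌋₊ + 1 := Nat.lt_floor_add_one t
      rw [abs_le]
      constructor <;> linarith
    calc |(μ d : ℝ)| * |((N / d ^ k : ℕ) : ℝ) - x / (d:ℝ)^k| ≤ 1 * 1 :=
          mul_le_mul h1 h2 (abs_nonneg _) zero_le_one
      _ = 1 := by ring
  have hsum_bound : |∑ d ∈ Finset.Icc 1 D,
      (μ d : ℝ) * ((N / d ^ k : ℕ) - x / (d:ℝ)^k)| ≤ (D : ℝ) := by
    calc |∑ d ∈ Finset.Icc 1 D, (μ d : ℝ) * ((N / d ^ k : ℕ) - x / (d:ℝ)^k)|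
        ≤ ∑ d ∈ Finset.Icc 1 D, |(μ d : ℝ) * ((N / d ^ k : ℕ) - x / (d:ℝ)^k)| :=
          Finset.abs_sum_le_sum_abs _ _
      _ ≤ ∑ _d ∈ Finset.Icc 1 D, (1:ℝ) := Finset.sum_le_sum hNd
      _ = (D : ℝ) := by
          rw [Finset.sum_const, Nat.card_Icc]
          simp
  have htail : x * |T| ≤ x * ((1:ℝ)/D) ^ (k-1) :=
    mul_le_mul_of_nonneg_left (gM_tail_bound hk hD1) hx0
  -- numeric finish
  have hxD : x * ((1:ℝ)/D) ^ (k-1) ≤ 2^(k-1) * y := by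
    have hy0' : (0:ℝ) < y := by linarith
    have hyk1 : y ^ (k-1) * y = x := by
      rw [← pow_succ, show k - 1 + 1 = k by omega]
      exact hyk
    have hDp : ((y/2):ℝ)^(k-1) ≤ (D:ℝ)^(k-1) :=
      pow_le_pow_left₀ (by positivity) (le_of_lt hDy2) _
    have hstep1 : x * ((1:ℝ)/D) ^ (k-1) = x / (D:ℝ)^(k-1) := by
      ring
    have hstep2 : x / (D:ℝ)^(k-1) ≤ x / ((y/2):ℝ)^(k-1) :=
      div_le_div_of_nonneg_left hx0 (by positivity) hDp
    have hstep3 : x / ((y/2):ℝ)^(k-1) = 2^(k-1) * y := by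
      rw [div_pow, div_div_eq_mul_div]
      rw [show x * 2^(k-1) = (2^(k-1) * y) * y^(k-1) by rw [← hyk1]; ring]
      rw [mul_div_cancel_right₀ _ (by positivity : (y:ℝ)^(k-1) ≠ 0)]
    rw [hstep1]
    rw [← hstep3]
    exact hstep2
  have habs : |Rf k x| ≤ (D:ℝ) + x * ((1:ℝ)/D) ^ (k-1) := by
    rw [hmain]
    calc |_ - x * T| ≤ |∑ d ∈ Finset.Icc 1 D,
          (μ d : ℝ) * ((N / d ^ k : ℕ) - x / (d:ℝ)^k)| + |x * T| := abs_sub _ _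
      _ ≤ (D:ℝ) + x * |T| := by
          rw [abs_mul, abs_of_nonneg hx0]
          exact add_le_add hsum_bound le_rfl
      _ ≤ (D:ℝ) + x * ((1:ℝ)/D) ^ (k-1) := add_le_add le_rfl htail
  calc |Rf k x| ≤ (D:ℝ) + x * ((1:ℝ)/D) ^ (k-1) := habs
    _ ≤ y + 2^(k-1) * y := add_le_add hDy hxD
    _ = (1 + 2^(k-1)) * y := by ring
end RkAux

theorem Rk_bigO (k : ℕ) (hk : 2 ≤ k) :
    (fun x : ℝ => Rf k x) =O[atTop] fun x : ℝ => x ^ ((1 : ℝ) / k) := by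
  rw [Asymptotics.isBigO_iff]
  refine ⟨1 + 2^(k-1), ?_⟩
  filter_upwards [eventually_ge_atTop ((2:ℝ)^k)] with x hx
  have hx0 : (0:ℝ) ≤ x := le_trans (by positivity) hx
  rw [Real.norm_eq_abs, Real.norm_eq_abs, abs_of_nonneg (Real.rpow_nonneg hx0 _)]
  exact RkAux.Rf_bound hk hx
end

section
/- Let n be a positive integer with n ≤ (x/4)^{1/3} and x ≥ 1. Then Q_2(x) = ∑_{a=1}^{x_n} μ(a)⌊x/a²⌋ + ∑_{k=1}^{n−1} M(x_k) − (n−1) M(x_n), where x_k = ⌊√(x/k)⌋ and M(y) = ∑_{m ≤ y} μ(m) is the Mertens function. -/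
open Filter MeasureTheory Finset

/-- Mertens function at a natural number cutoff. -/
def Mertens (N : ℕ) : ℤ := ∑ m ∈ Finset.Icc 1 N, ArithmeticFunction.moebius m

open ArithmeticFunction

lemma kfree2_iff (m : ℕ) : KFree 2 m ↔ Squarefree m := by
  constructor
  · intro h d hd
    rcases Nat.eq_zero_or_pos d with rfl | hd0
    · exfalso
      have hm : m = 0 := by simpa using hd
      exact h 2 one_lt_two (by simp [hm])
    rcases eq_or_lt_of_le (Nat.succ_le_of_lt hd0) with h1 | h1
    · subst h1; exact isUnit_one
    · exact absurd hd (by simpa [sq] using h d h1)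
  · intro h d hd hdvd
    have := h d (by rwa [← sq])
    rw [Nat.isUnit_iff] at this
    omega

lemma sq_dvd_iff {a b m d : ℕ} (ha : Squarefree a) (hm : m = b ^ 2 * a) (hm0 : m ≠ 0) :
    d ^ 2 ∣ m ↔ d ∣ b := by
  have hb0 : b ≠ 0 := by rintro rfl; simp at hm; omega
  have ha0 : a ≠ 0 := ha.ne_zero
  rcases Nat.eq_zero_or_pos d with rfl | hd0
  · simp [hm0, hb0]
  have hd0' : d ≠ 0 := hd0.ne'
  rw [← Nat.factorization_le_iff_dvd (pow_ne_zero 2 hd0') hm0,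
    ← Nat.factorization_le_iff_dvd hd0' hb0]
  have hfa := (Nat.squarefree_iff_factorization_le_one ha0).mp ha
  subst hm
  constructor <;> intro h <;> intro p <;> have h1 := h p <;>
    simp only [Nat.factorization_mul (pow_ne_zero 2 hb0) ha0, Nat.factorization_pow,
      Finsupp.coe_add, Finsupp.coe_smul, Pi.add_apply, Pi.smul_apply, smul_eq_mul] at * <;>
    have := hfa p <;> omega

lemma sum_moebius_divisors (b : ℕ) :
    ∑ d ∈ b.divisors, (moebius d : ℤ) = if b = 1 then 1 else 0 := by
  have h := congrArg (fun f : ArithmeticFunction ℤ => f b) moebius_mul_coe_zeta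
  simp only [coe_mul_zeta_apply, one_apply] at h
  exact h

lemma indicator_eq (m S : ℕ) (hm : m ≠ 0) (hS : ∀ d, 0 < d → d ^ 2 ∣ m → d ≤ S) :
    (if Squarefree m then (1 : ℤ) else 0)
      = ∑ d ∈ (Finset.Icc 1 S).filter (fun d => d ^ 2 ∣ m), moebius d := by
  obtain ⟨a, b, hab, ha⟩ := Nat.sq_mul_squarefree m
  have hset : (Finset.Icc 1 S).filter (fun d => d ^ 2 ∣ m) = b.divisors := by
    ext d
    simp only [mem_filter, mem_Icc, Nat.mem_divisors]
    have hb0 : b ≠ 0 := by rintro rfl; simp at hab; omega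
    constructor
    · rintro ⟨⟨h1, h2⟩, h3⟩
      exact ⟨(sq_dvd_iff ha hab.symm hm).mp h3, hb0⟩
    · rintro ⟨h1, _⟩
      have hd0 : d ≠ 0 := by rintro rfl; exact hb0 (Nat.eq_zero_of_zero_dvd h1)
      have h3 := (sq_dvd_iff ha hab.symm hm).mpr h1
      exact ⟨⟨Nat.one_le_iff_ne_zero.mpr hd0, hS d (Nat.pos_of_ne_zero hd0) h3⟩, h3⟩
  rw [hset, sum_moebius_divisors]
  congr 1
  have : Squarefree m ↔ b = 1 := by
    constructor
    · intro h
      have : b * b ∣ m := by rw [← hab]; exact Dvd.intro a (by ring)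
      exact Nat.isUnit_iff.mp (h b this)
    · rintro rfl; rw [← hab]; simpa using ha
  simp [this]

lemma card_multiples (N q : ℕ) :
    ((Finset.Icc 1 N).filter (fun m => q ∣ m)).card = N / q := by
  rw [show Finset.Icc 1 N = Finset.Ioc 0 N from rfl]
  exact Nat.Ioc_filter_dvd_card_eq_div N q

lemma floor_div_sq (x : ℝ) (hx : 0 ≤ x) (d : ℕ) :
    ((⌊x⌋₊ / d ^ 2 : ℕ) : ℤ) = ⌊x / (d : ℝ) ^ 2⌋ := by
  rw [← Nat.floor_div_natCast x (d ^ 2)]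
  rw [Int.natCast_floor_eq_floor (div_nonneg hx (by positivity))]
  push_cast
  ring_nf

lemma master (x : ℝ) (hx : 1 ≤ x) :
    (Qf 2 x : ℤ) = ∑ a ∈ Finset.Icc 1 ⌊Real.sqrt x⌋₊,
      moebius a * ⌊x / (a : ℝ) ^ 2⌋ := by
  have hx0 : (0 : ℝ) ≤ x := by linarith
  have h1 : (Qf 2 x : ℤ) = ∑ m ∈ Finset.Icc 1 ⌊x⌋₊, if Squarefree m then (1 : ℤ) else 0 := by
    rw [Qf, Finset.card_filter]
    push_cast
    refine Finset.sum_congr rfl fun m _ => ?_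
    simp [kfree2_iff]
  rw [h1]
  have h2 : ∀ m ∈ Finset.Icc 1 ⌊x⌋₊, (if Squarefree m then (1 : ℤ) else 0)
      = ∑ d ∈ Finset.Icc 1 ⌊Real.sqrt x⌋₊, if d ^ 2 ∣ m then (moebius d : ℤ) else 0 := by
    intro m hm
    rw [Finset.mem_Icc] at hm
    rw [indicator_eq m ⌊Real.sqrt x⌋₊ (by omega), Finset.sum_filter]
    intro d hd hdm
    have hd2 : d ^ 2 ≤ m := Nat.le_of_dvd (by omega) hdm
    have hdx : ((d : ℝ)) ^ 2 ≤ x := by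
      calc ((d : ℝ)) ^ 2 = ((d ^ 2 : ℕ) : ℝ) := by push_cast; ring
      _ ≤ ((⌊x⌋₊ : ℕ) : ℝ) := by exact_mod_cast le_trans hd2 hm.2
      _ ≤ x := Nat.floor_le hx0
    exact Nat.le_floor ((Real.le_sqrt (by positivity) hx0).mpr hdx)
  rw [Finset.sum_congr rfl h2, Finset.sum_comm]
  refine Finset.sum_congr rfl fun d hd => ?_
  rw [← Finset.sum_filter, Finset.sum_const, ← floor_div_sq x hx0 d, ← card_multiples ⌊x⌋₊ (d ^ 2)]
  ring

lemma le_xk_iff (x : ℝ) (hx0 : 0 ≤ x) (a k : ℕ) (ha : 0 < a) (hk : 0 < k) :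
    a ≤ ⌊Real.sqrt (x / k)⌋₊ ↔ k ≤ ⌊x / (a : ℝ) ^ 2⌋₊ := by
  have hk0 : (0 : ℝ) < k := by exact_mod_cast hk
  have ha0 : (0 : ℝ) < (a : ℝ) ^ 2 := by positivity
  rw [Nat.le_floor_iff (Real.sqrt_nonneg _),
    Real.le_sqrt (by positivity) (by positivity),
    Nat.le_floor_iff (by positivity), le_div_iff₀ hk0, le_div_iff₀ ha0]
  constructor <;> intro h <;> nlinarith

lemma mertens_diff (j k : ℕ) (h : j ≤ k) :
    ∑ a ∈ Finset.Ioc j k, (moebius a : ℤ) = Mertens k - Mertens j := by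
  have h0 : Mertens j + ∑ a ∈ Finset.Ioc j k, (moebius a : ℤ) = Mertens k := by
    rw [Mertens, Mertens, show Finset.Icc 1 j = Finset.Ioc 0 j from rfl,
      show Finset.Icc 1 k = Finset.Ioc 0 k from rfl]
    exact Finset.sum_Ioc_consecutive _ (Nat.zero_le _) h
  omega

theorem Q2_fast_formula (x : ℝ) (hx : 1 ≤ x) (n : ℕ) (hn : 0 < n)
    (hnx : (n : ℝ) ≤ (x / 4) ^ ((1 : ℝ) / 3)) :
    (Qf 2 x : ℤ) =
      (∑ a ∈ Finset.Icc 1 ⌊Real.sqrt (x / n)⌋₊,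
        ArithmeticFunction.moebius a * ⌊x / (a : ℝ) ^ 2⌋)
      + (∑ k ∈ Finset.Icc 1 (n - 1), Mertens ⌊Real.sqrt (x / k)⌋₊)
      - (n - 1 : ℤ) * Mertens ⌊Real.sqrt (x / n)⌋₊ := by
  have hx0 : (0 : ℝ) ≤ x := by linarith
  set xk : ℕ → ℕ := fun k => ⌊Real.sqrt (x / k)⌋₊ with hxk
  have hmono : ∀ j k : ℕ, 0 < j → j ≤ k → xk k ≤ xk j := by
    intro j k hj hjk
    have hj0 : (0 : ℝ) < j := by exact_mod_cast hj
    refine Nat.floor_le_floor (Real.sqrt_le_sqrt ?_)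
    exact div_le_div_of_nonneg_left hx0 hj0 (by exact_mod_cast hjk)
  have hsplit : ∑ a ∈ Finset.Icc 1 (xk 1), (moebius a : ℤ) * ⌊x / (a : ℝ) ^ 2⌋
      = (∑ a ∈ Finset.Icc 1 (xk n), (moebius a : ℤ) * ⌊x / (a : ℝ) ^ 2⌋)
        + ∑ a ∈ Finset.Ioc (xk n) (xk 1), (moebius a : ℤ) * ⌊x / (a : ℝ) ^ 2⌋ := by
    rw [show Finset.Icc 1 (xk 1) = Finset.Ioc 0 (xk 1) from rfl,
      show Finset.Icc 1 (xk n) = Finset.Ioc 0 (xk n) from rfl]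
    exact (Finset.sum_Ioc_consecutive _ (Nat.zero_le _) (hmono 1 n one_pos hn)).symm
  have hmain : (Qf 2 x : ℤ) = ∑ a ∈ Finset.Icc 1 (xk 1), (moebius a : ℤ) * ⌊x / (a : ℝ) ^ 2⌋ := by
    rw [master x hx]
    congr 2
    rw [hxk]
    norm_num
  have hkey : ∀ a ∈ Finset.Ioc (xk n) (xk 1),
      (moebius a : ℤ) * ⌊x / (a : ℝ) ^ 2⌋
        = ∑ k ∈ Finset.Icc 1 (n - 1), if a ≤ xk k then (moebius a : ℤ) else 0 := by
    intro a ha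
    rw [Finset.mem_Ioc] at ha
    have ha1 : 0 < a := lt_of_le_of_lt (Nat.zero_le _) ha.1
    set F := ⌊x / (a : ℝ) ^ 2⌋₊ with hF
    have hiff : ∀ k : ℕ, 0 < k → (a ≤ xk k ↔ k ≤ F) := fun k hk =>
      le_xk_iff x hx0 a k ha1 hk
    have hFn : F ≤ n - 1 := by
      have h2 : ¬ n ≤ F := by rw [← (hiff n hn)]; omega
      omega
    have hF1 : 1 ≤ F := (hiff 1 one_pos).mp ha.2
    have hfloor : ⌊x / (a : ℝ) ^ 2⌋ = (F : ℤ) :=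
      (Int.natCast_floor_eq_floor (by positivity)).symm
    have hcard : ((Finset.Icc 1 (n - 1)).filter (fun k => a ≤ xk k)) = Finset.Icc 1 F := by
      ext k
      simp only [Finset.mem_filter, Finset.mem_Icc]
      constructor
      · rintro ⟨⟨h1, h2⟩, h3⟩
        exact ⟨h1, (hiff k h1).mp h3⟩
      · rintro ⟨h1, h2⟩
        exact ⟨⟨h1, by omega⟩, (hiff k h1).mpr h2⟩
    rw [← Finset.sum_filter, hcard, Finset.sum_const, hfloor, Nat.card_Icc]
    simp only [nsmul_eq_mul, Nat.add_sub_cancel]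
    ring
  have hIoc : ∑ a ∈ Finset.Ioc (xk n) (xk 1), (moebius a : ℤ) * ⌊x / (a : ℝ) ^ 2⌋
      = ∑ k ∈ Finset.Icc 1 (n - 1), (Mertens (xk k) - Mertens (xk n)) := by
    rw [Finset.sum_congr rfl hkey, Finset.sum_comm]
    refine Finset.sum_congr rfl fun k hk => ?_
    rw [Finset.mem_Icc] at hk
    have h1 : (Finset.Ioc (xk n) (xk 1)).filter (fun a => a ≤ xk k)
        = Finset.Ioc (xk n) (xk k) := by
      ext a
      simp only [Finset.mem_filter, Finset.mem_Ioc]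
      have := hmono 1 k one_pos hk.1
      have := hmono k n hk.1 (by omega)
      omega
    rw [← Finset.sum_filter, h1]
    exact mertens_diff _ _ (hmono k n hk.1 (by omega))
  rw [hmain, hsplit, hIoc, Finset.sum_sub_distrib, Finset.sum_const, Nat.card_Icc,
    nsmul_eq_mul]
  have h9 : ((n - 1 + 1 - 1 : ℕ) : ℤ) = (n : ℤ) - 1 := by
    rw [Nat.add_sub_cancel, Nat.cast_sub hn]; simp
  rw [h9]
  ring
end

section
/- The number of squarefree integers up to 43 is 29; equivalently Q_2(43) = 29, and hence R_2(43) = 29 − 43/ζ(2) > 1.11 · 43^{1/4}. -/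
open Filter MeasureTheory Finset

lemma kfree2_iff_s6 (n : ℕ) (h1 : 1 ≤ n) (h2 : n ≤ 43) :
    KFree 2 n ↔ (¬ 4 ∣ n ∧ ¬ 9 ∣ n ∧ ¬ 25 ∣ n) := by
  constructor
  · intro h
    exact ⟨h 2 (by norm_num), h 3 (by norm_num), h 5 (by norm_num)⟩
  · rintro ⟨ha, hb, hc⟩ d hd hdvd
    have hle : d ^ 2 ≤ 43 := le_trans (Nat.le_of_dvd (by omega) hdvd) h2
    have hd6 : d ≤ 6 := by nlinarith
    interval_cases d
    · exact ha (by simpa using hdvd)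
    · exact hb (by simpa using hdvd)
    · exact ha (dvd_trans (by norm_num) hdvd)
    · exact hc (by simpa using hdvd)
    · exact ha (dvd_trans (by norm_num) hdvd)
  
theorem Q2_at_43 :
    Qf 2 43 = 29 ∧
    (29 : ℝ) - 43 / (riemannZeta 2).re > 1.11 * (43 : ℝ) ^ ((1 : ℝ) / 4) := by
  constructor
  · have hfl : ⌊(43:ℝ)⌋₊ = 43 := by norm_num
    unfold Qf
    rw [hfl]
    classical
    have heq : ((Finset.Icc 1 43).filter fun n => KFree 2 n)
        = (Finset.Icc 1 43).filter fun n => (¬ 4 ∣ n ∧ ¬ 9 ∣ n ∧ ¬ 25 ∣ n) := by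
      apply Finset.filter_congr
      intro n hn
      simp only [Finset.mem_Icc] at hn
      exact kfree2_iff_s6 n hn.1 hn.2
    rw [heq]
    decide
  · have hζ : (riemannZeta 2).re = Real.pi ^ 2 / 6 := by
      rw [riemannZeta_two,
        show ((Real.pi : ℂ) ^ 2 / 6) = ((Real.pi ^ 2 / 6 : ℝ) : ℂ) by push_cast; ring,
        Complex.ofReal_re]
    rw [hζ]
    have hπ := Real.pi_gt_d6
    have hx : (43 : ℝ) ^ ((1 : ℝ) / 4) < 2.5613 := by
      have hpow : ((43:ℝ) ^ ((1:ℝ)/4)) ^ (4:ℕ) = 43 := by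
        rw [← Real.rpow_natCast ((43:ℝ) ^ ((1:ℝ)/4)), ← Real.rpow_mul (by norm_num)]
        norm_num
      nlinarith [Real.rpow_nonneg (by norm_num : (0:ℝ) ≤ 43) ((1:ℝ)/4),
        sq_nonneg ((43:ℝ) ^ ((1:ℝ)/4) + 2.5613), sq_nonneg ((43:ℝ) ^ ((1:ℝ)/4) - 2.5613)]
    have hpos : (0:ℝ) < Real.pi ^ 2 / 6 := by positivity
    have h1 : 43 / (Real.pi ^ 2 / 6) < 26.141 := by
      rw [div_lt_iff₀ hpos]
      nlinarith
    nlinarith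
end

section
/- The number of cubefree integers up to 239 is 202; equivalently Q_3(239) = 202, and hence R_3(239) = 202 − 239/ζ(3) > 1.27 · 239^{1/6}. -/
open Filter MeasureTheory Finset

set_option maxRecDepth 10000 in
lemma Qf_card_aux :
    (((Finset.Icc 1 239).filter fun n => ∀ d ∈ Finset.Icc 2 n, ¬ d ^ 3 ∣ n).card) = 202 := by
  decide

lemma zeta3_re_lb : (1.202 : ℝ) < (riemannZeta 3).re := by
  have h3 : ((3 : ℕ) : ℂ) = (3 : ℂ) := by norm_num
  have h := zeta_nat_eq_tsum_of_gt_one (k := 3) (by norm_num)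
  rw [h3] at h
  have hre : (riemannZeta 3).re = ∑' n : ℕ, 1 / (n : ℝ) ^ 3 := by
    rw [h, show (∑' n : ℕ, 1 / (n : ℂ) ^ 3) = ((∑' n : ℕ, 1 / (n : ℝ) ^ 3 : ℝ) : ℂ) by
      rw [Complex.ofReal_tsum]; push_cast; rfl]
    exact Complex.ofReal_re _
  rw [hre]
  have hsum : Summable (fun n : ℕ => 1 / (n : ℝ) ^ 3) := by
    simpa using Real.summable_one_div_nat_pow.mpr (by norm_num : 1 < 3)
  have hle : ∑ n ∈ Finset.range 101, 1 / (n : ℝ) ^ 3 ≤ ∑' n : ℕ, 1 / (n : ℝ) ^ 3 :=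
    Summable.sum_le_tsum _ (fun i _ => by positivity) hsum
  refine lt_of_lt_of_le ?_ hle
  norm_num [Finset.sum_range_succ]

theorem Q3_at_239 :
    Qf 3 239 = 202 ∧
    (202 : ℝ) - 239 / (riemannZeta 3).re > 1.27 * (239 : ℝ) ^ ((1 : ℝ) / 6) := by
  constructor
  · have hfloor : ⌊(239 : ℝ)⌋₊ = 239 := by norm_num
    have heq : Qf 3 239 =
        (((Finset.Icc 1 239).filter fun n => ∀ d ∈ Finset.Icc 2 n, ¬ d ^ 3 ∣ n).card) := by
      unfold Qf
      rw [hfloor]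
      congr 1
      classical
      apply Finset.filter_congr
      intro n hn
      simp only [Finset.mem_Icc] at hn
      constructor
      · intro hk
        simp only [Finset.mem_Icc]
        intro d hd
        exact hk d hd.1
      · intro hk d hd hdvd
        have hdn : d ∣ n := dvd_trans (dvd_pow_self d (by norm_num)) hdvd
        have : d ≤ n := Nat.le_of_dvd (by omega) hdn
        exact hk d (Finset.mem_Icc.mpr ⟨hd, this⟩) hdvd
    rw [heq, Qf_card_aux]
  · have hz := zeta3_re_lb
    have hzpos : (0 : ℝ) < (riemannZeta 3).re := by linarith
    have hdiv : 239 / (riemannZeta 3).re < 198.8353 := by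
      rw [div_lt_iff₀ hzpos]
      nlinarith
    set t : ℝ := (239 : ℝ) ^ ((1 : ℝ) / 6) with ht
    have htpos : 0 < t := Real.rpow_pos_of_pos (by norm_num) _
    have ht6 : t ^ (6 : ℕ) = 239 := by
      rw [ht, ← Real.rpow_natCast ((239 : ℝ) ^ ((1 : ℝ) / 6)) 6,
        ← Real.rpow_mul (by norm_num)]
      norm_num
    have htlt : t < 2.4914 := by
      by_contra hcon
      push_neg at hcon
      have : (2.4914 : ℝ) ^ (6 : ℕ) ≤ t ^ (6 : ℕ) :=
        pow_le_pow_left₀ (by norm_num) hcon 6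
      rw [ht6] at this
      norm_num at this
    nlinarith
end
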